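/- For every KAM configuration C: C ->* <\x.t | []> for some x and t if and only if [[C]] has a weak barb on the coname b! with respect to the empty set of hidden names. -/

import Mathlib

/-! ### HOcore: syntax, LTS, barbs, barbed bisimilarity -/

/-- Channel names of HOcore. -/
abbrev Name := ℕ

/-- HOcore processes, with de Bruijn indices for process variables. -/
inductive Proc : Type
  | nil : Proc
  | pvar : ℕ → Proc
  | par : Proc → Proc → Proc
  | inp : Name → Proc → Proc
  | out : Name → Proc → Proc
  deriving DecidableEq

namespace Proc

/-- Shift the free de Bruijn indices `≥ k` by `d`. -/
def lift (d : ℕ) : ℕ → Proc → Proc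
  | _, nil => nil
  | k, pvar n => if n < k then pvar n else pvar (n + d)
  | k, par P Q => par (lift d k P) (lift d k Q)
  | k, inp a P => inp a (lift d (k + 1) P)
  | k, out a P => out a (lift d k P)

/-- Capture-avoiding substitution of `S` for the de Bruijn index `k` in `P`. -/
def subst : Proc → ℕ → Proc → Proc
  | nil, _, _ => nil
  | pvar n, k, S => if n = k then lift k 0 S else if k < n then pvar (n - 1) else pvar n
  | par P Q, k, S => par (subst P k S) (subst Q k S)
  | inp a P, k, S => inp a (subst P (k + 1) S)
  | out a P, k, S => out a (subst P k S)

/-- Free channel names of a process. -/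
def fnames : Proc → Finset Name
  | nil => ∅
  | pvar _ => ∅
  | par P Q => fnames P ∪ fnames Q
  | inp a P => insert a (fnames P)
  | out a P => insert a (fnames P)

end Proc

/-- Labels of the HOcore LTS: internal step, output, input. -/
inductive Label
  | tau : Label
  | outl : Name → Proc → Label
  | inl : Name → Proc → Label

/-- Structural congruence: parallel composition is associative, commutative,
and has `nil` as a neutral element. -/
inductive SCong : Proc → Proc → Prop
  | refl (P) : SCong P P
  | symm {P Q} : SCong P Q → SCong Q P
  | trans {P Q R} : SCong P Q → SCong Q R → SCong P R
  | parComm (P Q) : SCong (.par P Q) (.par Q P)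
  | parAssoc (P Q R) : SCong (.par (.par P Q) R) (.par P (.par Q R))
  | parNil (P) : SCong (.par P .nil) P
  | parCong {P P' Q Q'} : SCong P P' → SCong Q Q' → SCong (.par P Q) (.par P' Q')
  | inpCong {P P'} (a) : SCong P P' → SCong (.inp a P) (.inp a P')
  | outCong {P P'} (a) : SCong P P' → SCong (.out a P) (.out a P')

/-- The labeled transition system of HOcore (processes are considered up to
structural congruence). -/
inductive Step : Proc → Label → Proc → Prop
  | outS (a P) : Step (.out a P) (.outl a P) .nil
  | inpS (a Q P) : Step (.inp a Q) (.inl a P) (Q.subst 0 P)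
  | parL {P l P'} (Q) : Step P l P' → Step (.par P Q) l (.par P' Q)
  | parR {Q l Q'} (P) : Step Q l Q' → Step (.par P Q) l (.par P Q')
  | comm1 {P Q P' Q' a R} : Step P (.outl a R) P' → Step Q (.inl a R) Q' →
      Step (.par P Q) .tau (.par P' Q')
  | comm2 {P Q P' Q' a R} : Step P (.inl a R) P' → Step Q (.outl a R) Q' →
      Step (.par P Q) .tau (.par P' Q')
  | struct {P P' l Q Q'} : SCong P P' → Step P' l Q' → SCong Q' Q → Step P l Q

/-- One internal step. -/
def TauStep (P Q : Proc) : Prop := Step P Label.tau Q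

/-- Weak internal transition `==tau==>`. -/
def WTau : Proc → Proc → Prop := Relation.ReflTransGen TauStep

/-- Observables: input on a name, or output on a name (a coname). -/
inductive Barb
  | inb : Name → Barb
  | outb : Name → Barb
  deriving DecidableEq

/-- Strong observable action w.r.t. a set `H` of hidden names. -/
def StrongBarb (H : Set Name) (P : Proc) : Barb → Prop
  | .inb a => a ∉ H ∧ ∃ Q R, Step P (Label.inl a Q) R
  | .outb a => a ∉ H ∧ ∃ Q R, Step P (Label.outl a Q) R

/-- Weak observable action w.r.t. a set `H` of hidden names. -/
def WeakBarb (H : Set Name) (P : Proc) (α : Barb) : Prop :=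
  ∃ P', WTau P P' ∧ StrongBarb H P' α

/-- Barbed bisimulation w.r.t. the hidden names `H`. -/
def IsBarbedBisim (H : Set Name) (R : Proc → Proc → Prop) : Prop :=
  Symmetric R ∧ ∀ P Q, R P Q →
    (∀ α, StrongBarb H P α → WeakBarb H Q α) ∧
    (∀ S : Proc, ((S.fnames : Set Name) ∩ H = ∅) → R (.par P S) (.par Q S)) ∧
    (∀ P', Step P Label.tau P' → ∃ Q', WTau Q Q' ∧ R P' Q')

/-- Barbed equivalence w.r.t. the hidden names `H`. -/
def BarbedEquiv (H : Set Name) (P Q : Proc) : Prop :=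
  ∃ R, IsBarbedBisim H R ∧ R P Q
/-! ### Closed call-by-name lambda-calculus and the KAM -/

/-- Lambda-terms with de Bruijn indices. -/
inductive Tm
  | bvar : ℕ → Tm
  | lam : Tm → Tm
  | app : Tm → Tm → Tm
  deriving DecidableEq

namespace Tm

/-- Shift the free de Bruijn indices `≥ k` by `d`. -/
def liftT (d : ℕ) : ℕ → Tm → Tm
  | k, bvar n => if n < k then bvar n else bvar (n + d)
  | k, lam t => lam (liftT d (k + 1) t)
  | k, app t s => app (liftT d k t) (liftT d k s)

/-- Capture-avoiding substitution of `s` for the de Bruijn index `k`. -/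
def substT : Tm → ℕ → Tm → Tm
  | bvar n, k, s => if n = k then liftT k 0 s else if k < n then bvar (n - 1) else bvar n
  | lam t, k, s => lam (substT t (k + 1) s)
  | app t u, k, s => app (substT t k s) (substT u k s)

/-- All de Bruijn indices point to one of the `k` enclosing binders. -/
def ClosedUnder : ℕ → Tm → Prop
  | k, bvar n => n < k
  | k, lam t => ClosedUnder (k + 1) t
  | k, app t s => ClosedUnder k t ∧ ClosedUnder k s

/-- Closed terms. -/
def Closed (t : Tm) : Prop := ClosedUnder 0 t

end Tm

/-- Stacks of the KAM. -/
inductive Stk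
  | nil : Stk
  | cons : Tm → Stk → Stk

/-- Configurations of the KAM. -/
structure KConf where
  t : Tm
  π : Stk

/-- Transitions of the KAM. -/
inductive KStep : KConf → KConf → Prop
  | push {t s π} : KStep ⟨.app t s, π⟩ ⟨t, .cons s π⟩
  | grab {t s π} : KStep ⟨.lam t, .cons s π⟩ ⟨t.substT 0 s, π⟩

/-- Reflexive-transitive closure of the KAM transitions. -/
def KSteps : KConf → KConf → Prop := Relation.ReflTransGen KStep

def StkClosed : Stk → Prop
  | .nil => True
  | .cons t π => t.Closed ∧ StkClosed π

/-- A KAM configuration evaluating a closed term within a stack of closed terms. -/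
def KConfClosed (C : KConf) : Prop := C.t.Closed ∧ StkClosed C.π
/-! ### Translation of the KAM into HOcore -/

def hdN : Name := 0
def cN : Name := 1
def bN : Name := 2

/-- Translation of lambda-terms into HOcore. -/
def trT : Tm → Proc
  | .bvar n => .pvar n
  | .app t s =>
      .inp cN (.par ((trT t).lift 1 0)
        (.out cN (.par (.out hdN ((trT s).lift 1 0)) (.out cN (.pvar 0)))))
  | .lam t => .inp cN (.par (.inp hdN ((trT t).lift 1 1)) (.pvar 0))

/-- Translation of KAM stacks. -/
def trStk : Stk → Proc
  | .nil => .out bN .nil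
  | .cons t π => .par (.out hdN (trT t)) (.out cN (trStk π))

/-- Translation of KAM configurations. -/
def trConf (C : KConf) : Proc := .par (trT C.t) (.out cN (trStk C.π))

namespace Proc

lemma lift_zero : ∀ (P : Proc) (k : ℕ), P.lift 0 k = P := by
  intro P
  induction P <;> intro k <;> simp [lift, *]

lemma lift_lift : ∀ (P : Proc) (d e i j : ℕ), i ≤ j → j ≤ i + e →
    (P.lift e i).lift d j = P.lift (e + d) i := by
  intro P
  induction P <;> intro d e i j h1 h2 <;> simp [lift, *]
  · rename_i n
    by_cases hn : n < i
    · simp [lift, hn, Nat.lt_of_lt_of_le hn h1]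
    · simp [lift, hn]
      have : ¬ n + e < j := by omega
      simp [this]; omega
  · rename_i ih; exact ih d e (i+1) (j+1) (by omega) (by omega)

lemma lift_comm : ∀ (P : Proc) (d e i j : ℕ), i ≤ j →
    (P.lift e i).lift d (j + e) = (P.lift d j).lift e i := by
  intro P
  induction P <;> intro d e i j h <;> simp [lift, *]
  · rename_i n
    by_cases hn : n < i
    · simp [lift, hn, show n < j + e by omega, show n < j by omega]
    · by_cases hj : n < j
      · simp [lift, hn, hj, show n + e < j + e by omega]
      · simp [lift, hn, hj, show ¬ n + e < j + e by omega,
          show ¬ n + d < i by omega]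
        omega
  · rename_i ih
    have := ih d e (i+1) (j+1) (by omega)
    simpa [Nat.add_right_comm] using this

lemma subst_lift : ∀ (P : Proc) (k : ℕ) (S : Proc), (P.lift 1 k).subst k S = P := by
  intro P
  induction P <;> intro k S <;> simp [lift, subst, *]
  rename_i n
  by_cases hn : n < k
  · simp [subst, hn, show n ≠ k by omega, show ¬ k < n by omega]
  · simp [subst, hn, show ¬ n + 1 = k by omega, show k < n + 1 by omega]

lemma subst_lift_comm : ∀ (P : Proc) (j k : ℕ) (S : Proc), j ≤ k →
    ((P.lift 1 j).subst (k+1) S) = (P.subst k S).lift 1 j := by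
  intro P
  induction P <;> intro j k S h <;> simp [lift, subst, *]
  rename_i n
  by_cases hn : n < j
  · simp [lift, subst, hn, show n ≠ k + 1 by omega, show ¬ k + 1 < n by omega,
      show n ≠ k by omega, show ¬ k < n by omega]
  · by_cases hk : n = k
    · subst hk
      simp [lift, subst, hn, show ¬ n < j by omega]
      rw [lift_lift S 1 n 0 j (by omega) (by omega)]
    · by_cases hkn : k < n
      · simp [lift, subst, hn, show ¬ n + 1 = k + 1 by omega, show k + 1 < n + 1 by omega,
          hk, hkn, show ¬ n - 1 < j by omega]
        omega
      · simp [lift, subst, hn, show ¬ n + 1 = k + 1 by omega, show ¬ k + 1 < n + 1 by omega,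
          hk, hkn]

end Proc
namespace Tm

lemma closedUnder_mono : ∀ (t : Tm) (i j : ℕ), i ≤ j → ClosedUnder i t → ClosedUnder j t := by
  intro t
  induction t <;> intro i j h hc <;> simp [ClosedUnder] at hc ⊢
  · omega
  · rename_i ih; exact ih (i+1) (j+1) (by omega) hc
  · rename_i ih1 ih2; exact ⟨ih1 i j h hc.1, ih2 i j h hc.2⟩

lemma liftT_closed : ∀ (t : Tm) (d i : ℕ), ClosedUnder i t → t.liftT d i = t := by
  intro t
  induction t <;> intro d i hc <;> simp [ClosedUnder, liftT] at hc ⊢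
  · intro h; omega
  · rename_i ih; exact ih d (i+1) hc
  · rename_i ih1 ih2; exact ⟨ih1 d i hc.1, ih2 d i hc.2⟩

lemma substT_closed : ∀ (t s : Tm) (k : ℕ), ClosedUnder (k+1) t → ClosedUnder 0 s →
    ClosedUnder k (t.substT k s) := by
  intro t
  induction t <;> intro s k ht hs <;> simp [ClosedUnder, substT] at ht ⊢
  · rename_i n
    by_cases hn : n = k
    · subst hn
      simp only [if_pos rfl, liftT_closed s n 0 hs]
      exact closedUnder_mono s 0 n (by omega) hs
    · simp [hn, show ¬ k < n by omega, ClosedUnder]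
      omega
  · rename_i ih; exact ih s (k+1) ht hs
  · rename_i ih1 ih2; exact ⟨ih1 s k ht.1 hs, ih2 s k ht.2 hs⟩

end Tm

lemma trT_liftT : ∀ (t : Tm) (d k : ℕ), (trT t).lift d k = trT (t.liftT d k) := by
  intro t
  induction t <;> intro d k
  · simp [trT, Tm.liftT, Proc.lift]
    split <;> simp [trT]
  · rename_i t ih
    simp [trT, Tm.liftT, Proc.lift, ← ih]
    have := Proc.lift_comm (trT t) d 1 1 (k+1) (by omega)
    simpa using this
  · rename_i t s ih1 ih2
    simp [trT, Tm.liftT, Proc.lift, ← ih1, ← ih2]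
    constructor
    · have := Proc.lift_comm (trT t) d 1 0 k (by omega)
      simpa using this
    · have := Proc.lift_comm (trT s) d 1 0 k (by omega)
      simpa using this

lemma trT_substT : ∀ (t s : Tm) (k : ℕ), (trT t).subst k (trT s) = trT (t.substT k s) := by
  intro t
  induction t <;> intro s k
  · rename_i n
    simp [trT, Tm.substT, Proc.subst]
    by_cases hn : n = k
    · simp [hn, trT_liftT]
    · by_cases hk : k < n <;> simp [hn, hk, trT]
  · rename_i t ih
    simp [trT, Tm.substT, Proc.subst, ← ih]
    exact Proc.subst_lift_comm (trT t) 1 (k+1) (trT s) (by omega)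
  · rename_i t u ih1 ih2
    simp [trT, Tm.substT, Proc.subst, ← ih1, ← ih2]
    exact ⟨Proc.subst_lift_comm (trT t) 0 k (trT s) (by omega),
           Proc.subst_lift_comm (trT u) 0 k (trT s) (by omega)⟩
/-! ### SCong congruence under lift and subst -/

lemma scong_lift {P Q : Proc} (h : SCong P Q) : ∀ d k, SCong (P.lift d k) (Q.lift d k) := by
  induction h with
  | refl P => exact fun d k => .refl _
  | symm _ ih => exact fun d k => .symm (ih d k)
  | trans _ _ ih1 ih2 => exact fun d k => .trans (ih1 d k) (ih2 d k)
  | parComm P Q => exact fun d k => .parComm _ _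
  | parAssoc P Q R => exact fun d k => .parAssoc _ _ _
  | parNil P => exact fun d k => .parNil _
  | parCong _ _ ih1 ih2 => exact fun d k => .parCong (ih1 d k) (ih2 d k)
  | inpCong a _ ih => exact fun d k => .inpCong a (ih d (k+1))
  | outCong a _ ih => exact fun d k => .outCong a (ih d k)

lemma scong_subst_left {P Q : Proc} (h : SCong P Q) : ∀ k S, SCong (P.subst k S) (Q.subst k S) := by
  induction h with
  | refl P => exact fun k S => .refl _
  | symm _ ih => exact fun k S => .symm (ih k S)
  | trans _ _ ih1 ih2 => exact fun k S => .trans (ih1 k S) (ih2 k S)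
  | parComm P Q => exact fun k S => .parComm _ _
  | parAssoc P Q R => exact fun k S => .parAssoc _ _ _
  | parNil P => exact fun k S => .parNil _
  | parCong _ _ ih1 ih2 => exact fun k S => .parCong (ih1 k S) (ih2 k S)
  | inpCong a _ ih => exact fun k S => .inpCong a (ih (k+1) S)
  | outCong a _ ih => exact fun k S => .outCong a (ih k S)

lemma scong_subst_right {S S' : Proc} (h : SCong S S') :
    ∀ (P : Proc) (k), SCong (P.subst k S) (P.subst k S') := by
  intro P
  induction P <;> intro k <;> simp [Proc.subst]
  · exact SCong.refl _
  · rename_i n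
    by_cases hn : n = k
    · simp [hn]; exact scong_lift h k 0
    · by_cases hk : k < n <;> simp [hn, hk] <;> exact SCong.refl _
  · rename_i ih1 ih2; exact SCong.parCong (ih1 k) (ih2 k)
  · rename_i ih; exact SCong.inpCong _ (ih (k+1))
  · rename_i ih; exact SCong.outCong _ (ih k)

lemma scong_subst {P Q S S' : Proc} (h1 : SCong P Q) (h2 : SCong S S') (k : ℕ) :
    SCong (P.subst k S) (Q.subst k S') :=
  SCong.trans (scong_subst_left h1 k S) (scong_subst_right h2 Q k)

/-! ### Atoms of a process -/

def atoms : Proc → Multiset Proc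
  | .nil => 0
  | .par P Q => atoms P + atoms Q
  | .pvar n => {.pvar n}
  | .inp a P => {.inp a P}
  | .out a P => {.out a P}

/-- Congruence of atoms: same shape with structurally congruent bodies. -/
inductive ACong : Proc → Proc → Prop
  | pvar (n) : ACong (.pvar n) (.pvar n)
  | inp {P Q} (a) : SCong P Q → ACong (.inp a P) (.inp a Q)
  | out {P Q} (a) : SCong P Q → ACong (.out a P) (.out a Q)

lemma ACong.symm' : ∀ {X Y}, ACong X Y → ACong Y X := by
  intro X Y h
  cases h with
  | pvar n => exact .pvar n
  | inp a h => exact .inp a h.symm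
  | out a h => exact .out a h.symm

lemma ACong.trans' : ∀ {X Y Z}, ACong X Y → ACong Y Z → ACong X Z := by
  intro X Y Z h1 h2
  cases h1 with
  | pvar n => exact h2
  | inp a h => cases h2 with | inp _ h' => exact .inp a (h.trans h')
  | out a h => cases h2 with | out _ h' => exact .out a (h.trans h')

abbrev ARel := Multiset.Rel ACong

lemma arel_singleton {X Y : Proc} (h : ACong X Y) : ARel {X} {Y} :=
  Multiset.rel_cons_left.2 ⟨Y, 0, h, Multiset.Rel.zero, rfl⟩

lemma arel_refl : ∀ P : Proc, ARel (atoms P) (atoms P) := by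
  intro P
  induction P with
  | nil => exact Multiset.Rel.zero
  | pvar n => exact arel_singleton (.pvar n)
  | par P Q ih1 ih2 => exact ih1.add ih2
  | inp a P _ => exact arel_singleton (.inp a (SCong.refl P))
  | out a P _ => exact arel_singleton (.out a (SCong.refl P))

lemma arel_symm {m n : Multiset Proc} (h : ARel m n) : ARel n m := by
  have := Multiset.rel_flip.2 h
  exact this.mono (fun a _ b _ hab => ACong.symm' hab)

lemma arel_trans {m n p : Multiset Proc} (h1 : ARel m n) (h2 : ARel n p) : ARel m p := by
  induction h1 generalizing p with
  | zero => rw [Multiset.rel_zero_left.1 h2]; exact Multiset.Rel.zero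
  | @cons a b as bs hab h ih =>
    obtain ⟨c, cs, hbc, hrest, rfl⟩ := Multiset.rel_cons_left.1 h2
    exact Multiset.Rel.cons (ACong.trans' hab hbc) (ih hrest)

lemma scong_arel {P Q : Proc} (h : SCong P Q) : ARel (atoms P) (atoms Q) := by
  induction h with
  | refl P => exact arel_refl P
  | symm _ ih => exact arel_symm ih
  | trans _ _ ih1 ih2 => exact arel_trans ih1 ih2
  | parComm P Q =>
      show ARel (atoms P + atoms Q) (atoms Q + atoms P)
      rw [add_comm]; exact (arel_refl Q).add (arel_refl P)
  | parAssoc P Q R =>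
      show ARel (atoms P + atoms Q + atoms R) (atoms P + (atoms Q + atoms R))
      rw [add_assoc]; exact (arel_refl P).add ((arel_refl Q).add (arel_refl R))
  | parNil P => show ARel (atoms P + 0) (atoms P); rw [add_zero]; exact arel_refl P
  | parCong _ _ ih1 ih2 => exact ih1.add ih2
  | inpCong a h _ => exact arel_singleton (.inp a h)
  | outCong a h _ => exact arel_singleton (.out a h)
/-! ### Characterization of transitions via atoms -/

lemma step_out_atoms {P P' : Proc} {a : Name} {R : Proc} (h : Step P (.outl a R) P') :
    ∃ r, ARel (atoms P) (.out a R ::ₘ r) ∧ ARel (atoms P') r := by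
  generalize hl : Label.outl a R = l at h
  induction h with
  | outS b Q =>
      cases hl
      exact ⟨0, arel_singleton (.out _ (SCong.refl _)), Multiset.Rel.zero⟩
  | inpS => cases hl
  | parL Q h ih =>
      obtain ⟨r, h1, h2⟩ := ih hl
      refine ⟨r + atoms Q, ?_, h2.add (arel_refl Q)⟩
      have := h1.add (arel_refl Q)
      simpa [Multiset.cons_add, atoms] using this
  | parR Q h ih =>
      obtain ⟨r, h1, h2⟩ := ih hl
      refine ⟨atoms Q + r, ?_, (arel_refl Q).add h2⟩
      have := (arel_refl Q).add h1
      show ARel (atoms Q + atoms _) _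
      rw [show Multiset.cons (Proc.out a R) (atoms Q + r) = atoms Q + (Proc.out a R ::ₘ r) by
        simp [Multiset.cons_swap]]
      exact this
  | comm1 _ _ _ _ => cases hl
  | comm2 _ _ _ _ => cases hl
  | struct hs h hs' ih =>
      obtain ⟨r, h1, h2⟩ := ih hl
      exact ⟨r, arel_trans (scong_arel hs) h1, arel_trans (scong_arel hs'.symm) h2⟩

lemma step_in_atoms {P P' : Proc} {a : Name} {R : Proc} (h : Step P (.inl a R) P') :
    ∃ T r, ARel (atoms P) (.inp a T ::ₘ r) ∧ ARel (atoms P') (atoms (T.subst 0 R) + r) := by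
  generalize hl : Label.inl a R = l at h
  induction h with
  | outS => cases hl
  | inpS b Q S =>
      cases hl
      refine ⟨Q, 0, arel_singleton (.inp _ (SCong.refl _)), ?_⟩
      rw [add_zero]; exact arel_refl _
  | parL Q h ih =>
      obtain ⟨T, r, h1, h2⟩ := ih hl
      refine ⟨T, r + atoms Q, ?_, ?_⟩
      · have := h1.add (arel_refl Q)
        simpa [Multiset.cons_add, atoms] using this
      · have := h2.add (arel_refl Q)
        rwa [add_assoc] at this
  | parR Q h ih =>
      obtain ⟨T, r, h1, h2⟩ := ih hl
      refine ⟨T, atoms Q + r, ?_, ?_⟩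
      · have := (arel_refl Q).add h1
        show ARel (atoms Q + atoms _) _
        rw [show Multiset.cons (Proc.inp a T) (atoms Q + r) = atoms Q + (Proc.inp a T ::ₘ r) by
          simp [Multiset.cons_swap]]
        exact this
      · have := (arel_refl Q).add h2
        show ARel (atoms Q + atoms _) _
        rw [show atoms (T.subst 0 R) + (atoms Q + r) = atoms Q + (atoms (T.subst 0 R) + r) by
          ring_nf
          rw [add_left_comm]]
        exact this
  | comm1 _ _ _ _ => cases hl
  | comm2 _ _ _ _ => cases hl
  | struct hs h hs' ih =>
      obtain ⟨T, r, h1, h2⟩ := ih hl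
      exact ⟨T, r, arel_trans (scong_arel hs) h1, arel_trans (scong_arel hs'.symm) h2⟩

lemma step_tau_atoms {P P' : Proc} (h : Step P .tau P') :
    ∃ a R T r, ARel (atoms P) (.out a R ::ₘ .inp a T ::ₘ r) ∧
      ARel (atoms P') (atoms (T.subst 0 R) + r) := by
  generalize hl : Label.tau = l at h
  induction h with
  | outS => cases hl
  | inpS => cases hl
  | parL Q h ih =>
      obtain ⟨a, R, T, r, h1, h2⟩ := ih hl
      refine ⟨a, R, T, r + atoms Q, ?_, ?_⟩
      · have := h1.add (arel_refl Q)
        simpa [Multiset.cons_add, atoms] using this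
      · have := h2.add (arel_refl Q)
        rwa [add_assoc] at this
  | parR Q h ih =>
      obtain ⟨a, R, T, r, h1, h2⟩ := ih hl
      refine ⟨a, R, T, atoms Q + r, ?_, ?_⟩
      · have := (arel_refl Q).add h1
        show ARel (atoms Q + atoms _) _
        rw [show (Proc.out a R ::ₘ Proc.inp a T ::ₘ (atoms Q + r))
            = atoms Q + (Proc.out a R ::ₘ Proc.inp a T ::ₘ r) by
          simp [Multiset.cons_swap]]
        exact this
      · have := (arel_refl Q).add h2
        show ARel (atoms Q + atoms _) _
        rw [show atoms (T.subst 0 R) + (atoms Q + r) = atoms Q + (atoms (T.subst 0 R) + r) by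
          rw [add_left_comm]]
        exact this
  | @comm1 _ _ _ _ a R ho hi ih1 ih2 =>
      obtain ⟨r1, ho1, ho2⟩ := step_out_atoms ho
      obtain ⟨T, r2, hi1, hi2⟩ := step_in_atoms hi
      refine ⟨a, R, T, r1 + r2, ?_, ?_⟩
      · have := ho1.add hi1
        show ARel (atoms _ + atoms _) _
        rw [show (Proc.out a R ::ₘ Proc.inp a T ::ₘ (r1 + r2))
            = (Proc.out a R ::ₘ r1) + (Proc.inp a T ::ₘ r2) by
          simp [Multiset.cons_add, Multiset.cons_swap]]
        exact this
      · have := ho2.add hi2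
        show ARel (atoms _ + atoms _) _
        rw [show atoms (T.subst 0 R) + (r1 + r2) = r1 + (atoms (T.subst 0 R) + r2) by
          rw [add_left_comm]]
        exact this
  | @comm2 _ _ _ _ a R hi ho ih1 ih2 =>
      obtain ⟨T, r1, hi1, hi2⟩ := step_in_atoms hi
      obtain ⟨r2, ho1, ho2⟩ := step_out_atoms ho
      refine ⟨a, R, T, r1 + r2, ?_, ?_⟩
      · have := hi1.add ho1
        show ARel (atoms _ + atoms _) _
        rw [show (Proc.out a R ::ₘ Proc.inp a T ::ₘ (r1 + r2))
            = (Proc.inp a T ::ₘ r1) + (Proc.out a R ::ₘ r2) by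
          simp [Multiset.cons_add, Multiset.cons_swap]]
        exact this
      · have := hi2.add ho2
        show ARel (atoms _ + atoms _) _
        rw [show atoms (T.subst 0 R) + (r1 + r2) = (atoms (T.subst 0 R) + r1) + r2 by
          rw [add_assoc]]
        exact this
  | struct hs h hs' ih =>
      obtain ⟨a, R, T, r, h1, h2⟩ := ih hl
      exact ⟨a, R, T, r, arel_trans (scong_arel hs) h1, arel_trans (scong_arel hs'.symm) h2⟩
/-! ### Forward simulation: KAM steps as tau steps of the translation -/

lemma subst_app_body (t s : Tm) (S : Proc) :
    (Proc.par ((trT t).lift 1 0)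
      (.out cN (.par (.out hdN ((trT s).lift 1 0)) (.out cN (.pvar 0))))).subst 0 S
    = .par (trT t) (.out cN (.par (.out hdN (trT s)) (.out cN S))) := by
  simp [Proc.subst, Proc.subst_lift, Proc.lift_zero]

lemma subst_lam_body (t : Tm) (S : Proc) :
    (Proc.par (.inp hdN ((trT t).lift 1 1)) (.pvar 0)).subst 0 S
    = .par (.inp hdN (trT t)) S := by
  simp [Proc.subst, Proc.subst_lift, Proc.lift_zero]

lemma step_push (t s : Tm) (π : Stk) :
    Step (trConf ⟨.app t s, π⟩) .tau (trConf ⟨t, .cons s π⟩) := by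
  refine Step.struct (SCong.refl _)
    (Step.comm2 (Step.inpS cN _ (trStk π)) (Step.outS cN (trStk π))) ?_
  rw [subst_app_body]
  exact SCong.parNil _

lemma step_grab1 (t s : Tm) (π : Stk) :
    Step (trConf ⟨.lam t, .cons s π⟩) .tau
      (.par (.inp hdN (trT t)) (.par (.out hdN (trT s)) (.out cN (trStk π)))) := by
  refine Step.struct (SCong.refl _)
    (Step.comm2 (Step.inpS cN _ (trStk (.cons s π))) (Step.outS cN (trStk (.cons s π)))) ?_
  rw [show trStk (.cons s π) = Proc.par (.out hdN (trT s)) (.out cN (trStk π)) from rfl,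
    subst_lam_body]
  exact SCong.parNil _

lemma step_grab2 (t s : Tm) (π : Stk) :
    Step (.par (.inp hdN (trT t)) (.par (.out hdN (trT s)) (.out cN (trStk π)))) .tau
      (trConf ⟨t.substT 0 s, π⟩) := by
  refine Step.struct (SCong.refl _)
    (Step.comm2 (Step.inpS hdN (trT t) (trT s))
      (Step.parL _ (Step.outS hdN (trT s)))) ?_
  rw [trT_substT]
  exact SCong.parCong (SCong.refl _)
    (SCong.trans (SCong.parComm _ _) (SCong.parNil _))

lemma kstep_wtau {C C' : KConf} (h : KStep C C') : WTau (trConf C) (trConf C') := by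
  cases h with
  | push => exact Relation.ReflTransGen.single (step_push _ _ _)
  | grab =>
      exact (Relation.ReflTransGen.single (step_grab1 _ _ _)).tail (step_grab2 _ _ _)

lemma ksteps_wtau {C C' : KConf} (h : KSteps C C') : WTau (trConf C) (trConf C') := by
  induction h with
  | refl => exact Relation.ReflTransGen.refl
  | tail _ h ih => exact ih.trans (kstep_wtau h)

lemma step_final (t : Tm) :
    Step (trConf ⟨.lam t, .nil⟩) .tau
      (.par (.par (.inp hdN (trT t)) (.out bN .nil)) .nil) := by
  have := Step.comm2 (Step.inpS cN (.par (.inp hdN ((trT t).lift 1 1)) (.pvar 0)) (trStk .nil))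
    (Step.outS cN (trStk .nil))
  rw [show trStk .nil = Proc.out bN .nil from rfl, subst_lam_body] at this
  exact this

lemma forward {C : KConf} {t : Tm} (h : KSteps C ⟨.lam t, .nil⟩) :
    WeakBarb (∅ : Set Name) (trConf C) (.outb bN) := by
  refine ⟨_, (ksteps_wtau h).tail (step_final t), ?_⟩
  exact ⟨by simp, _, _, Step.parL _ (Step.parR _ (Step.outS bN .nil))⟩

lemma kstep_closed {C C' : KConf} (h : KStep C C') (hc : KConfClosed C) : KConfClosed C' := by
  cases h with
  | push =>
      obtain ⟨ht, hπ⟩ := hc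
      exact ⟨ht.1, ht.2, hπ⟩
  | grab =>
      obtain ⟨ht, hs, hπ⟩ := hc
      exact ⟨Tm.substT_closed _ _ 0 ht hs, hπ⟩
/-! ### Backward analysis: invariant on processes reachable from a translated configuration -/

lemma one_case {α : Type*} [DecidableEq α] {x b : α} {s : Multiset α}
    (h : x ::ₘ 0 = b ::ₘ s) : b = x ∧ s = 0 := by
  rcases Multiset.cons_eq_cons.1 h with ⟨rfl, rfl⟩ | ⟨_, cs, h1, _⟩
  · exact ⟨rfl, rfl⟩
  · exact absurd h1.symm (Multiset.cons_ne_zero)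

lemma two_cases {α : Type*} [DecidableEq α] {x y b : α} {s : Multiset α}
    (h : x ::ₘ y ::ₘ 0 = b ::ₘ s) :
    (b = x ∧ s = y ::ₘ 0) ∨ (b = y ∧ s = x ::ₘ 0) := by
  rcases Multiset.cons_eq_cons.1 h with ⟨rfl, rfl⟩ | ⟨_, cs, h1, h2⟩
  · exact Or.inl ⟨rfl, rfl⟩
  · obtain ⟨rfl, rfl⟩ := one_case h1
    exact Or.inr ⟨rfl, by simpa using h2⟩

lemma three_cases {α : Type*} [DecidableEq α] {x y z b : α} {s : Multiset α}
    (h : x ::ₘ y ::ₘ z ::ₘ 0 = b ::ₘ s) :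
    (b = x ∧ s = y ::ₘ z ::ₘ 0) ∨ (b = y ∧ s = x ::ₘ z ::ₘ 0) ∨
    (b = z ∧ s = x ::ₘ y ::ₘ 0) := by
  rcases Multiset.cons_eq_cons.1 h with ⟨rfl, rfl⟩ | ⟨_, cs, h1, h2⟩
  · exact Or.inl ⟨rfl, rfl⟩
  · rcases two_cases h1 with ⟨rfl, rfl⟩ | ⟨rfl, rfl⟩
    · exact Or.inr (Or.inl ⟨rfl, by simpa [Multiset.cons_swap] using h2⟩)
    · exact Or.inr (Or.inr ⟨rfl, by simpa [Multiset.cons_swap] using h2⟩)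

lemma atoms_trT (t : Tm) : atoms (trT t) = {trT t} := by
  cases t <;> rfl

lemma atoms_trConf (t : Tm) (π : Stk) :
    atoms (trConf ⟨t, π⟩) = trT t ::ₘ Proc.out cN (trStk π) ::ₘ 0 := by
  show atoms (trT t) + atoms (.out cN (trStk π)) = _
  rw [atoms_trT]
  rfl

/-- The invariant satisfied by every process reachable from `trConf C`. -/
def KInv (C : KConf) (P : Proc) : Prop :=
  (∃ C', KSteps C C' ∧ KConfClosed C' ∧ ARel (atoms P) (atoms (trConf C')))
  ∨ (∃ t s π, KSteps C ⟨.lam t, .cons s π⟩ ∧ Tm.ClosedUnder 1 t ∧ Tm.Closed s ∧ StkClosed π ∧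
      ARel (atoms P)
        (.inp hdN (trT t) ::ₘ .out hdN (trT s) ::ₘ .out cN (trStk π) ::ₘ 0))
  ∨ (∃ t, KSteps C ⟨.lam t, .nil⟩)

lemma inv_tau {C : KConf} {P P' : Proc} (h : KInv C P) (hstp : Step P .tau P') : KInv C P' := by
  obtain ⟨a, R, T, r, h1, h2⟩ := step_tau_atoms hstp
  rcases h with ⟨⟨t', π⟩, hK, hCl, hrel⟩ | ⟨t, s, π, hK, hct, hcs, hcπ, hrel⟩ | h3
  · -- case 1 : P related to trConf ⟨t', π⟩
    have hrel2 : ARel (Proc.out a R ::ₘ Proc.inp a T ::ₘ r)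
        (trT t' ::ₘ Proc.out cN (trStk π) ::ₘ 0) := by
      rw [← atoms_trConf]; exact arel_trans (arel_symm h1) hrel
    obtain ⟨b, k1, hb, hrest, hKeq⟩ := Multiset.rel_cons_left.1 hrel2
    obtain ⟨c, k2, hc, hr, rfl⟩ := Multiset.rel_cons_left.1 hrest
    rcases two_cases hKeq with ⟨rfl, hs1⟩ | ⟨rfl, hs1⟩
    · -- the output atom would be the translation of t' : impossible
      cases t' with
      | bvar n => exact absurd hCl.1 (by simp [Tm.Closed, Tm.ClosedUnder])
      | lam u => simp only [trT] at hb; cases hb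
      | app u v => simp only [trT] at hb; cases hb
    · -- the output atom is the stack output on channel c
      cases hb with
      | out _ hR =>
        obtain ⟨rfl, rfl⟩ := one_case hs1.symm
        have hr0 : r = 0 := Multiset.rel_zero_right.1 hr
        subst hr0
        rw [add_zero] at h2
        cases t' with
        | bvar n => exact absurd hCl.1 (by simp [Tm.Closed, Tm.ClosedUnder])
        | app u v =>
          simp only [trT] at hc
          cases hc with
          | inp _ hT =>
            have hcong := scong_subst hT hR 0
            rw [subst_app_body] at hcong
            refine Or.inl ⟨⟨u, .cons v π⟩, hK.tail KStep.push,
              kstep_closed KStep.push hCl, ?_⟩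
            rw [atoms_trConf]
            have := arel_trans h2 (scong_arel hcong)
            simpa [atoms, atoms_trT, trStk, Multiset.singleton_add] using this
        | lam u =>
          simp only [trT] at hc
          cases hc with
          | inp _ hT =>
            have hcong := scong_subst hT hR 0
            rw [subst_lam_body] at hcong
            cases π with
            | nil => exact Or.inr (Or.inr ⟨u, hK⟩)
            | cons s π' =>
              refine Or.inr (Or.inl ⟨u, s, π', hK, hCl.1, hCl.2.1, hCl.2.2, ?_⟩)
              have := arel_trans h2 (scong_arel hcong)
              simpa [atoms, atoms_trT, trStk, Multiset.singleton_add,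
                Multiset.cons_swap] using this
  · -- case 2 : intermediate state of grab
    have hrel2 : ARel (Proc.out a R ::ₘ Proc.inp a T ::ₘ r)
        (.inp hdN (trT t) ::ₘ .out hdN (trT s) ::ₘ .out cN (trStk π) ::ₘ 0) :=
      arel_trans (arel_symm h1) hrel
    obtain ⟨b, k1, hb, hrest, hKeq⟩ := Multiset.rel_cons_left.1 hrel2
    obtain ⟨c, k2, hc, hr, rfl⟩ := Multiset.rel_cons_left.1 hrest
    rcases three_cases hKeq with ⟨rfl, hs1⟩ | ⟨rfl, hs1⟩ | ⟨rfl, hs1⟩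
    · cases hb
    · cases hb with
      | out _ hR =>
        -- now `a = hdN`; the input atom must be `inp hdN (trT t)`
        rcases two_cases hs1.symm with ⟨rfl, hk2⟩ | ⟨rfl, hk2⟩
        · cases hc with
          | inp _ hT =>
            subst hk2
            have hcong := scong_subst hT hR 0
            rw [trT_substT] at hcong
            refine Or.inl ⟨⟨t.substT 0 s, π⟩, hK.tail KStep.grab,
              ⟨Tm.substT_closed _ _ 0 hct hcs, hcπ⟩, ?_⟩
            rw [atoms_trConf]
            refine arel_trans h2 ?_
            have hfst : ARel (atoms (T.subst 0 R)) ({trT (t.substT 0 s)} : Multiset Proc) := by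
              rw [← atoms_trT]; exact scong_arel hcong
            have := hfst.add hr
            simpa [Multiset.singleton_add] using this
        · cases hc
    · cases hb with
      | out _ hR => rcases two_cases hs1.symm with ⟨rfl, -⟩ | ⟨rfl, -⟩ <;> cases hc
  · exact Or.inr (Or.inr h3)

lemma inv_barb {C : KConf} {P : Proc} (h : KInv C P)
    (hb : StrongBarb (∅ : Set Name) P (.outb bN)) : ∃ t, KSteps C ⟨.lam t, .nil⟩ := by
  obtain ⟨-, Q, R, hstep⟩ := hb
  obtain ⟨r, h1, -⟩ := step_out_atoms hstep
  rcases h with ⟨⟨t', π⟩, hK, hCl, hrel⟩ | ⟨t, s, π, hK, hct, hcs, hcπ, hrel⟩ | h3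
  · have hrel2 : ARel (Proc.out bN Q ::ₘ r) (trT t' ::ₘ Proc.out cN (trStk π) ::ₘ 0) := by
      rw [← atoms_trConf]; exact arel_trans (arel_symm h1) hrel
    obtain ⟨b, k1, hb', hrest, hKeq⟩ := Multiset.rel_cons_left.1 hrel2
    rcases two_cases hKeq with ⟨rfl, -⟩ | ⟨rfl, -⟩
    · cases t' with
      | bvar n => exact absurd hCl.1 (by simp [Tm.Closed, Tm.ClosedUnder])
      | lam u => simp only [trT] at hb'; cases hb'
      | app u v => simp only [trT] at hb'; cases hb'
    · cases hb'
  · have hrel2 : ARel (Proc.out bN Q ::ₘ r)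
        (.inp hdN (trT t) ::ₘ .out hdN (trT s) ::ₘ .out cN (trStk π) ::ₘ 0) :=
      arel_trans (arel_symm h1) hrel
    obtain ⟨b, k1, hb', hrest, hKeq⟩ := Multiset.rel_cons_left.1 hrel2
    rcases three_cases hKeq with ⟨rfl, -⟩ | ⟨rfl, -⟩ | ⟨rfl, -⟩
    · cases hb'
    · cases hb'
    · cases hb'
  · exact h3
/-- `C ->* <\x.t | []>` for some `t` iff `[[C]]` has a weak barb on the coname `b!`
w.r.t. the empty set of hidden names. -/
theorem kam_convergence_iff_weak_barb (C : KConf) (hC : KConfClosed C) :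
    (∃ t : Tm, KSteps C ⟨.lam t, .nil⟩) ↔
      WeakBarb (∅ : Set Name) (trConf C) (.outb bN) := by
  constructor
  · rintro ⟨t, h⟩
    exact forward h
  · rintro ⟨P', hw, hb⟩
    have hinv : KInv C P' := by
      clear hb
      induction hw with
      | refl => exact Or.inl ⟨C, Relation.ReflTransGen.refl, hC, arel_refl _⟩
      | tail _ hs ih => exact inv_tau ih hs
    exact inv_barb hinv hb
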